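/- Let B be a C*-algebra, M a right Hilbert B-module with finite orthonormal basis (ξ_i)_{i=1}^n and N a right Hilbert B-module with finite orthonormal basis (η_j)_{j=1}^m. Let A be a C*-algebra and Φ : B ⊗ B → A a *-homomorphism (minimal tensor product). Then the elements ζ_{ij} := (ξ_i ⊠ η_j) ⊗ Φ(⟨ξ_i,ξ_i⟩ ⊗ ⟨η_j,η_j⟩) form a finite orthonormal basis for the interior tensor product (M ⊠ N) ⊗_Φ A. -/

import Mathlib

open scoped InnerProductSpace RightActions

private lemma stmt7_sumaux {A B : Type*} [AddCommMonoid A] [AddCommMonoid B]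
    (f : A → B) (h0 : f 0 = 0) (hadd : ∀ x y, f (x + y) = f x + f y)
    {ι : Type*} (s : Finset ι) (g : ι → A) :
    f (∑ i ∈ s, g i) = ∑ i ∈ s, f (g i) := by
  classical
  induction s using Finset.induction_on with
  | empty => simpa
  | insert _ _ h ih => rw [Finset.sum_insert h, Finset.sum_insert h, hadd, ih]

private lemma stmt7_mulaux {A : Type*} [NonUnitalRing A] {c F e G a : A}
    (h1 : F * e = F) (h2 : e * G = G) :
    (c * F * e) * (e * G * a) = c * (F * G) * a := by
  rw [h2, mul_assoc c F e, h1]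
  simp only [mul_assoc]


/-- The class `CStarModule` as it stood in Mathlib of December 2024: a *right* Hilbert
C⋆-module (action `SMul Aᵐᵒᵖ E`, inner product `A`-linear on the right). -/
class OldCStarModule (A : outParam <| Type*) (E : Type*) [NonUnitalSemiring A] [StarRing A]
    [Module ℂ A] [AddCommGroup E] [Module ℂ E] [PartialOrder A] [SMul Aᵐᵒᵖ E] [Norm A] [Norm E]
    extends Inner A E where
  inner_add_right {x} {y} {z} : inner x (y + z) = inner x y + inner x z
  inner_self_nonneg {x} : 0 ≤ inner x x
  inner_self {x} : inner x x = 0 ↔ x = 0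
  inner_op_smul_right {a : A} {x y : E} : inner x (y <• a) = inner x y * a
  inner_smul_right_complex {z : ℂ} {x} {y} : inner x (z • y) = z • inner x y
  star_inner x y : star (inner x y) = inner y x
  norm_eq_sqrt_norm_inner_self x : ‖x‖ = √‖inner x x‖

namespace OldCStarModule

variable {A E : Type*} [NonUnitalCStarAlgebra A] [PartialOrder A] [NormedAddCommGroup E]
  [Module ℂ E] [SMul Aᵐᵒᵖ E] [OldCStarModule A E]

lemma inner_add_left {x y z : E} : ⟪x + y, z⟫_A = ⟪x, z⟫_A + ⟪y, z⟫_A := by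
  rw [← star_star (r := ⟪x + y, z⟫_A)]
  simp only [OldCStarModule.inner_add_right, star_add, OldCStarModule.star_inner]

lemma inner_op_smul_left {a : A} {x y : E} : ⟪x <• a, y⟫_A = star a * ⟪x, y⟫_A := by
  rw [← OldCStarModule.star_inner y, OldCStarModule.inner_op_smul_right, star_mul,
    OldCStarModule.star_inner]

lemma inner_smul_left_complex {z : ℂ} {x y : E} : ⟪z • x, y⟫_A = star z • ⟪x, y⟫_A := by
  rw [← OldCStarModule.star_inner y, OldCStarModule.inner_smul_right_complex, star_smul,
    OldCStarModule.star_inner]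

@[simp] lemma inner_zero_right {x : E} : ⟪x, 0⟫_A = 0 := by
  rw [← zero_smul ℂ (0 : E), OldCStarModule.inner_smul_right_complex, zero_smul]

@[simp] lemma inner_zero_left {x : E} : ⟪0, x⟫_A = 0 := by
  rw [← OldCStarModule.star_inner, OldCStarModule.inner_zero_right, star_zero]

lemma inner_neg_right {x y : E} : ⟪x, -y⟫_A = -⟪x, y⟫_A := by
  rw [← neg_one_smul ℂ y, OldCStarModule.inner_smul_right_complex, neg_one_smul]

lemma inner_sub_right {x y z : E} : ⟪x, y - z⟫_A = ⟪x, y⟫_A - ⟪x, z⟫_A := by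
  rw [sub_eq_add_neg, OldCStarModule.inner_add_right, OldCStarModule.inner_neg_right,
    ← sub_eq_add_neg]

lemma inner_sub_left {x y z : E} : ⟪x - y, z⟫_A = ⟪x, z⟫_A - ⟪y, z⟫_A := by
  rw [← OldCStarModule.star_inner z, OldCStarModule.inner_sub_right, star_sub,
    OldCStarModule.star_inner, OldCStarModule.star_inner]

lemma inner_sum_right {ι : Type*} {s : Finset ι} {x : E} {y : ι → E} :
    ⟪x, ∑ i ∈ s, y i⟫_A = ∑ i ∈ s, ⟪x, y i⟫_A :=
  map_sum (AddMonoidHom.mk' (fun y => ⟪x, y⟫_A) (fun _ _ => OldCStarModule.inner_add_right)) y s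

lemma inner_sum_left {ι : Type*} {s : Finset ι} {x : ι → E} {y : E} :
    ⟪∑ i ∈ s, x i, y⟫_A = ∑ i ∈ s, ⟪x i, y⟫_A :=
  map_sum (AddMonoidHom.mk' (fun x => ⟪x, y⟫_A) (fun _ _ => OldCStarModule.inner_add_left)) x s

lemma isSelfAdjoint_inner_self {x : E} : IsSelfAdjoint ⟪x, x⟫_A := OldCStarModule.star_inner x x

lemma inner_smul_left_real {z : ℝ} {x y : E} : ⟪z • x, y⟫_A = z • ⟪x, y⟫_A := by
  rw [← Complex.coe_smul, OldCStarModule.inner_smul_left_complex, Complex.star_def,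
    Complex.conj_ofReal, Complex.coe_smul]

lemma inner_smul_right_real {z : ℝ} {x y : E} : ⟪x, z • y⟫_A = z • ⟪x, y⟫_A := by
  rw [← Complex.coe_smul, OldCStarModule.inner_smul_right_complex, Complex.coe_smul]

lemma inner_mul_inner_swap_le [StarOrderedRing A] {x y : E} :
    ⟪y, x⟫_A * ⟪x, y⟫_A ≤ ‖x‖ ^ 2 • ⟪y, y⟫_A := by
  rcases eq_or_ne x 0 with h | h
  · simp [h]
  · have hpos : 0 < ‖x‖ := by
      rw [OldCStarModule.norm_eq_sqrt_norm_inner_self (A := A) x, Real.sqrt_pos, norm_pos_iff]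
      intro H
      exact h (OldCStarModule.inner_self.mp H)
    have h₁ : ∀ (a : A),
        (0 : A) ≤ ‖x‖ ^ 2 • (star a * a) - ‖x‖ ^ 2 • (star a * ⟪x, y⟫_A)
                  - ‖x‖ ^ 2 • (⟪y, x⟫_A * a) + ‖x‖ ^ 2 • (‖x‖ ^ 2 • ⟪y, y⟫_A) := fun a => by
      calc (0 : A) ≤ ⟪x <• a - ‖x‖ ^ 2 • y, x <• a - ‖x‖ ^ 2 • y⟫_A :=
                      by exact OldCStarModule.inner_self_nonneg
            _ = star a * ⟪x, x⟫_A * a - ‖x‖ ^ 2 • (star a * ⟪x, y⟫_A)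
                  - ‖x‖ ^ 2 • (⟪y, x⟫_A * a) + ‖x‖ ^ 2 • (‖x‖ ^ 2 • ⟪y, y⟫_A) := by
                      simp only [OldCStarModule.inner_sub_right,
                        OldCStarModule.inner_op_smul_right, OldCStarModule.inner_sub_left,
                        OldCStarModule.inner_op_smul_left, OldCStarModule.inner_smul_left_real,
                        mul_sub, sub_mul, mul_smul_comm, smul_mul_assoc,
                        OldCStarModule.inner_smul_right_real, smul_sub, mul_assoc]
                      abel
            _ ≤ ‖x‖ ^ 2 • (star a * a) - ‖x‖ ^ 2 • (star a * ⟪x, y⟫_A)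
                  - ‖x‖ ^ 2 • (⟪y, x⟫_A * a) + ‖x‖ ^ 2 • (‖x‖ ^ 2 • ⟪y, y⟫_A) := by
                      gcongr
                      calc _ ≤ ‖⟪x, x⟫_A‖ • (star a * a) :=
                          CStarAlgebra.star_left_conjugate_le_norm_smul
                            (hb := OldCStarModule.isSelfAdjoint_inner_self)
                        _ = (√‖⟪x, x⟫_A‖) ^ 2 • (star a * a) := by
                          rw [Real.sq_sqrt]
                          positivity
                        _ = ‖x‖ ^ 2 • (star a * a) := by
                          rw [← OldCStarModule.norm_eq_sqrt_norm_inner_self]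
    specialize h₁ ⟪x, y⟫_A
    simp only [OldCStarModule.star_inner, sub_self, zero_sub, le_neg_add_iff_add_le,
      add_zero] at h₁
    rwa [smul_le_smul_iff_of_pos_left (pow_pos hpos _)] at h₁

end OldCStarModule

lemma OldCStarModule.norm_inner_le {A : Type*} [NonUnitalCStarAlgebra A] [PartialOrder A]
    [StarOrderedRing A] (E : Type*) [NormedAddCommGroup E]
    [Module ℂ E] [SMul Aᵐᵒᵖ E] [OldCStarModule A E] {x y : E} :
    ‖⟪x, y⟫_A‖ ≤ ‖x‖ * ‖y‖ := by
  have := calc ‖⟪x, y⟫_A‖ ^ 2 = ‖⟪y, x⟫_A * ⟪x, y⟫_A‖ := by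
                rw [← OldCStarModule.star_inner x, CStarRing.norm_star_mul_self, pow_two]
    _ ≤ ‖‖x‖ ^ 2 • ⟪y, y⟫_A‖ := by
                refine CStarAlgebra.norm_le_norm_of_nonneg_of_le ?_
                  OldCStarModule.inner_mul_inner_swap_le
                rw [← OldCStarModule.star_inner x]
                exact star_mul_self_nonneg ⟪x, y⟫_A
    _ = ‖x‖ ^ 2 * ‖⟪y, y⟫_A‖ := by simp [norm_smul]
    _ = ‖x‖ ^ 2 * ‖y‖ ^ 2 := by
                simp only [OldCStarModule.norm_eq_sqrt_norm_inner_self (A := A) y, norm_nonneg,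
                  Real.sq_sqrt]
    _ = (‖x‖ * ‖y‖) ^ 2 := by simp only [mul_pow]
  refine (pow_le_pow_iff_left₀ (norm_nonneg ⟪x, y⟫_A) ?_ (by simp)).mp this
  exact mul_nonneg (norm_nonneg _) (norm_nonneg _)

/-- Let `M`, `N` be right Hilbert `B`-modules with finite orthonormal bases
`(ξ i)` and `(η j)`, `A` a C*-algebra and `Φ : B ⊗ B → A` a *-homomorphism on the minimal
tensor product (encoded by its values `Φ a b` on elementary tensors: bilinear, multiplicative
and star-preserving).  Let `T = (M ⊠ N) ⊗_Φ A` be the interior tensor product of the exterior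
tensor product along `Φ` (encoded by the map `ι` to simple tensors, satisfying the defining
inner-product formula, module compatibilities, and density of the span of simple tensors).
Then the elements `ζ i j = ι (ξ i) (η j) (Φ ⟪ξ i, ξ i⟫ ⟪η j, η j⟫)` form a finite orthonormal
basis of `T`: they are mutually orthogonal, each `⟪ζ i j, ζ i j⟫` is a projection in `A`, and
every `t : T` has the Fourier expansion `t = ∑ ζ i j <• ⟪ζ i j, t⟫`. -/
theorem stmt7 {B : Type*} [NonUnitalCStarAlgebra B] [PartialOrder B] [StarOrderedRing B]
    {A : Type*} [NonUnitalCStarAlgebra A] [PartialOrder A] [StarOrderedRing A]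
    {M : Type*} [NormedAddCommGroup M] [Module ℂ M] [SMul Bᵐᵒᵖ M] [OldCStarModule B M]
    [CompleteSpace M]
    {N : Type*} [NormedAddCommGroup N] [Module ℂ N] [SMul Bᵐᵒᵖ N] [OldCStarModule B N]
    [CompleteSpace N]
    -- the *-homomorphism `Φ : B ⊗ B → A` via its values on elementary tensors
    (Φ : B → B → A)
    (hΦadd₁ : ∀ a a' b, Φ (a + a') b = Φ a b + Φ a' b)
    (hΦadd₂ : ∀ a b b', Φ a (b + b') = Φ a b + Φ a b')
    (hΦsmul : ∀ (c : ℂ) a b, Φ (c • a) b = c • Φ a b)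
    (hΦmul : ∀ a a' b b', Φ (a * a') (b * b') = Φ a b * Φ a' b')
    (hΦstar : ∀ a b, Φ (star a) (star b) = star (Φ a b))
    -- the interior tensor product `T = (M ⊠ N) ⊗_Φ A`
    {T : Type*} [NormedAddCommGroup T] [Module ℂ T] [SMul Aᵐᵒᵖ T] [OldCStarModule A T]
    [CompleteSpace T]
    (ι : M → N → A → T)
    (hι_inner : ∀ (x : M) (y : N) (a : A) (x' : M) (y' : N) (a' : A),
      ⟪ι x y a, ι x' y' a'⟫_A = star a * Φ ⟪x, x'⟫_B ⟪y, y'⟫_B * a')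
    (hι_smul : ∀ (x : M) (y : N) (a b : A), (ι x y a) <• b = ι x y (a * b))
    (hι_add₁ : ∀ (x x' : M) (y : N) (a : A), ι (x + x') y a = ι x y a + ι x' y a)
    (hι_add₂ : ∀ (x : M) (y y' : N) (a : A), ι x (y + y') a = ι x y a + ι x y' a)
    (hι_add₃ : ∀ (x : M) (y : N) (a a' : A), ι x y (a + a') = ι x y a + ι x y a')
    (hι_dense : Dense (↑(Submodule.span ℂ
      (Set.range fun p : M × N × A => ι p.1 p.2.1 p.2.2)) : Set T))
    -- the finite orthonormal bases of `M` and `N`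
    (n m : ℕ) (ξ : Fin n → M) (η : Fin m → N)
    (hξorth : ∀ i i', i ≠ i' → ⟪ξ i, ξ i'⟫_B = 0)
    (hξproj : ∀ i, IsIdempotentElem ⟪ξ i, ξ i⟫_B ∧ IsSelfAdjoint ⟪ξ i, ξ i⟫_B)
    (hξexp : ∀ x : M, x = ∑ i, ξ i <• ⟪ξ i, x⟫_B)
    (hηorth : ∀ j j', j ≠ j' → ⟪η j, η j'⟫_B = 0)
    (hηproj : ∀ j, IsIdempotentElem ⟪η j, η j⟫_B ∧ IsSelfAdjoint ⟪η j, η j⟫_B)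
    (hηexp : ∀ y : N, y = ∑ j, η j <• ⟪η j, y⟫_B) :
    ∀ ζ : Fin n → Fin m → T,
      (∀ i j, ζ i j = ι (ξ i) (η j) (Φ ⟪ξ i, ξ i⟫_B ⟪η j, η j⟫_B)) →
      (∀ i j i' j', (i, j) ≠ (i', j') → ⟪ζ i j, ζ i' j'⟫_A = 0) ∧
      (∀ i j, IsIdempotentElem ⟪ζ i j, ζ i j⟫_A ∧ IsSelfAdjoint ⟪ζ i j, ζ i j⟫_A) ∧
      (∀ t : T, t = ∑ i, ∑ j, ζ i j <• ⟪ζ i j, t⟫_A) := by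
  intro ζ hζ
  -- basic consequences of additivity of Φ
  have hΦzero₁ : ∀ b, Φ 0 b = 0 := by
    intro b
    have h := hΦadd₁ 0 0 b
    rw [add_zero] at h
    have h' : Φ 0 b + 0 = Φ 0 b + Φ 0 b := by rw [add_zero]; exact h
    exact (add_left_cancel h').symm
  have hΦzero₂ : ∀ a, Φ a 0 = 0 := by
    intro a
    have h := hΦadd₂ a 0 0
    rw [add_zero] at h
    have h' : Φ a 0 + 0 = Φ a 0 + Φ a 0 := by rw [add_zero]; exact h
    exact (add_left_cancel h').symm
  have hΦsum₁ : ∀ (b : B) (g : Fin n → B),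
      Φ (∑ i, g i) b = ∑ i, Φ (g i) b :=
    fun b g => stmt7_sumaux (fun x => Φ x b) (hΦzero₁ b) (fun x y => hΦadd₁ x y b) _ g
  have hΦsum₂ : ∀ (a : B) (g : Fin m → B),
      Φ a (∑ j, g j) = ∑ j, Φ a (g j) :=
    fun a g => stmt7_sumaux (fun x => Φ a x) (hΦzero₂ a) (fun x y => hΦadd₂ a x y) _ g
  -- `x <• 0 = 0` in any CStarModule
  have hsmulzeroM : ∀ x : M, x <• (0 : B) = 0 := by
    intro x
    rw [← OldCStarModule.inner_self (A := B) (x := x <• (0 : B)),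
      OldCStarModule.inner_op_smul_right, mul_zero]
  have hsmulzeroN : ∀ y : N, y <• (0 : B) = 0 := by
    intro y
    rw [← OldCStarModule.inner_self (A := B) (x := y <• (0 : B)),
      OldCStarModule.inner_op_smul_right, mul_zero]
  -- ξ i <• ⟪ξ i, ξ i⟫ = ξ i, and similarly for η
  have hξfix : ∀ i, ξ i <• ⟪ξ i, ξ i⟫_B = ξ i := by
    intro i
    have h := hξexp (ξ i)
    rw [Finset.sum_eq_single i
      (fun i' _ hne => by rw [hξorth i' i hne]; exact hsmulzeroM _)
      (by simp)] at h
    exact h.symm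
  have hηfix : ∀ j, η j <• ⟪η j, η j⟫_B = η j := by
    intro j
    have h := hηexp (η j)
    rw [Finset.sum_eq_single j
      (fun j' _ hne => by rw [hηorth j' j hne]; exact hsmulzeroN _)
      (by simp)] at h
    exact h.symm
  -- absorption identities
  have hpabs_left : ∀ i (x : M), ⟪ξ i, ξ i⟫_B * ⟪ξ i, x⟫_B = ⟪ξ i, x⟫_B := by
    intro i x
    calc ⟪ξ i, ξ i⟫_B * ⟪ξ i, x⟫_B = star ⟪ξ i, ξ i⟫_B * ⟪ξ i, x⟫_B := by
          rw [(hξproj i).2.star_eq]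
      _ = ⟪ξ i <• ⟪ξ i, ξ i⟫_B, x⟫_B := (OldCStarModule.inner_op_smul_left).symm
      _ = ⟪ξ i, x⟫_B := by rw [hξfix i]
  have hpabs_right : ∀ i (x : M), ⟪x, ξ i⟫_B * ⟪ξ i, ξ i⟫_B = ⟪x, ξ i⟫_B := by
    intro i x
    calc ⟪x, ξ i⟫_B * ⟪ξ i, ξ i⟫_B = ⟪x, ξ i <• ⟪ξ i, ξ i⟫_B⟫_B :=
          (OldCStarModule.inner_op_smul_right).symm
      _ = ⟪x, ξ i⟫_B := by rw [hξfix i]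
  have hqabs_left : ∀ j (y : N), ⟪η j, η j⟫_B * ⟪η j, y⟫_B = ⟪η j, y⟫_B := by
    intro j y
    calc ⟪η j, η j⟫_B * ⟪η j, y⟫_B = star ⟪η j, η j⟫_B * ⟪η j, y⟫_B := by
          rw [(hηproj j).2.star_eq]
      _ = ⟪η j <• ⟪η j, η j⟫_B, y⟫_B := (OldCStarModule.inner_op_smul_left).symm
      _ = ⟪η j, y⟫_B := by rw [hηfix j]
  have hqabs_right : ∀ j (y : N), ⟪y, η j⟫_B * ⟪η j, η j⟫_B = ⟪y, η j⟫_B := by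
    intro j y
    calc ⟪y, η j⟫_B * ⟪η j, η j⟫_B = ⟪y, η j <• ⟪η j, η j⟫_B⟫_B :=
          (OldCStarModule.inner_op_smul_right).symm
      _ = ⟪y, η j⟫_B := by rw [hηfix j]
  -- Parseval identities
  have hPar_M : ∀ u x : M, ∑ i, ⟪u, ξ i⟫_B * ⟪ξ i, x⟫_B = ⟪u, x⟫_B := by
    intro u x
    have h : ∀ i, ⟪u, ξ i⟫_B * ⟪ξ i, x⟫_B = ⟪ξ i <• ⟪ξ i, u⟫_B, x⟫_B := by
      intro i
      rw [OldCStarModule.inner_op_smul_left, OldCStarModule.star_inner]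
    simp_rw [h]
    rw [← OldCStarModule.inner_sum_left, ← hξexp u]
  have hPar_N : ∀ v y : N, ∑ j, ⟪v, η j⟫_B * ⟪η j, y⟫_B = ⟪v, y⟫_B := by
    intro v y
    have h : ∀ j, ⟪v, η j⟫_B * ⟪η j, y⟫_B = ⟪η j <• ⟪η j, v⟫_B, y⟫_B := by
      intro j
      rw [OldCStarModule.inner_op_smul_left, OldCStarModule.star_inner]
    simp_rw [h]
    rw [← OldCStarModule.inner_sum_left, ← hηexp v]
  -- the projections e i j
  have heidem : ∀ i j, Φ ⟪ξ i, ξ i⟫_B ⟪η j, η j⟫_B * Φ ⟪ξ i, ξ i⟫_B ⟪η j, η j⟫_B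
      = Φ ⟪ξ i, ξ i⟫_B ⟪η j, η j⟫_B := by
    intro i j
    rw [← hΦmul, (hξproj i).1, (hηproj j).1]
  have hestar : ∀ i j, star (Φ ⟪ξ i, ξ i⟫_B ⟪η j, η j⟫_B)
      = Φ ⟪ξ i, ξ i⟫_B ⟪η j, η j⟫_B := by
    intro i j
    rw [← hΦstar, (hξproj i).2.star_eq, (hηproj j).2.star_eq]
  -- inner product of ζ with itself
  have hζself : ∀ i j, ⟪ζ i j, ζ i j⟫_A = Φ ⟪ξ i, ξ i⟫_B ⟪η j, η j⟫_B := by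
    intro i j
    rw [hζ i j, hι_inner, hestar i j, heidem i j, heidem i j]
  -- key term computation
  have hterm : ∀ (u : M) (v : N) (c : A) (x : M) (y : N) (a : A) (i : Fin n) (j : Fin m),
      ⟪ι u v c, ζ i j⟫_A * ⟪ζ i j, ι x y a⟫_A
        = star c * Φ (⟪u, ξ i⟫_B * ⟪ξ i, x⟫_B) (⟪v, η j⟫_B * ⟪η j, y⟫_B) * a := by
    intro u v c x y a i j
    rw [hζ i j, hι_inner, hι_inner, hestar i j, hΦmul]
    exact stmt7_mulaux
      (by rw [← hΦmul, hpabs_right, hqabs_right])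
      (by rw [← hΦmul, hpabs_left, hqabs_left])
  -- double-sum computation on simple tensors
  have hS : ∀ (u : M) (v : N) (c : A) (x : M) (y : N) (a : A),
      ∑ i, ∑ j, ⟪ι u v c, ζ i j⟫_A * ⟪ζ i j, ι x y a⟫_A = ⟪ι u v c, ι x y a⟫_A := by
    intro u v c x y a
    rw [hι_inner, ← hPar_M u x, ← hPar_N v y, hΦsum₁]
    simp_rw [hΦsum₂, hterm u v c x y a]
    simp [Finset.mul_sum, Finset.sum_mul]
  -- inner product with the Fourier sum
  have hinner_S : ∀ (s t : T),
      ⟪s, ∑ i, ∑ j, ζ i j <• ⟪ζ i j, t⟫_A⟫_A = ∑ i, ∑ j, ⟪s, ζ i j⟫_A * ⟪ζ i j, t⟫_A := by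
    intro s t
    simp [OldCStarModule.inner_sum_right, OldCStarModule.inner_op_smul_right]
  -- elements orthogonal to all simple tensors vanish
  have hperp : ∀ d : T, (∀ (u : M) (v : N) (c : A), ⟪ι u v c, d⟫_A = 0) → d = 0 := by
    intro d hd
    have hspan : ∀ s ∈ Submodule.span ℂ
        (Set.range fun p : M × N × A => ι p.1 p.2.1 p.2.2), ⟪s, d⟫_A = 0 := by
      intro s hs
      induction hs using Submodule.span_induction with
      | mem x hx => obtain ⟨⟨u, v, c⟩, rfl⟩ := hx; exact hd u v c
      | zero => simp
      | add x y _ _ hx hy => rw [OldCStarModule.inner_add_left, hx, hy, add_zero]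
      | smul c x _ hx => rw [OldCStarModule.inner_smul_left_complex, hx, smul_zero]
    have hcont : Continuous fun s : T => ⟪s, d⟫_A := by
      refine (LipschitzWith.of_dist_le_mul (K := ‖d‖₊) fun x y => ?_).continuous
      rw [dist_eq_norm, dist_eq_norm, ← OldCStarModule.inner_sub_left, coe_nnnorm]
      calc ‖⟪x - y, d⟫_A‖ ≤ ‖x - y‖ * ‖d‖ := OldCStarModule.norm_inner_le T
        _ = ‖d‖ * ‖x - y‖ := mul_comm _ _
    have hall : ∀ s : T, ⟪s, d⟫_A = 0 := by
      intro s
      have hclosed : IsClosed {s : T | ⟪s, d⟫_A = 0} := isClosed_eq hcont continuous_const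
      exact hclosed.closure_subset_iff.mpr (fun s hs => hspan s hs) (hι_dense s)
    exact OldCStarModule.inner_self.mp (hall d)
  -- Fourier expansion on simple tensors
  have hSimple : ∀ (x : M) (y : N) (a : A),
      ι x y a = ∑ i, ∑ j, ζ i j <• ⟪ζ i j, ι x y a⟫_A := by
    intro x y a
    refine sub_eq_zero.mp (hperp _ fun u v c => ?_)
    rw [OldCStarModule.inner_sub_right, hinner_S, hS u v c x y a, sub_self]
  refine ⟨?_, ?_, ?_⟩
  · -- orthogonality
    intro i j i' j' hne
    rw [hζ i j, hζ i' j', hι_inner]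
    by_cases hi : i = i'
    · subst hi
      have hj : j ≠ j' := by simpa [Prod.ext_iff] using hne
      rw [hηorth j j' hj, hΦzero₂, mul_zero, zero_mul]
    · rw [hξorth i i' hi, hΦzero₁, mul_zero, zero_mul]
  · -- projections
    intro i j
    refine ⟨?_, OldCStarModule.isSelfAdjoint_inner_self⟩
    show ⟪ζ i j, ζ i j⟫_A * ⟪ζ i j, ζ i j⟫_A = ⟪ζ i j, ζ i j⟫_A
    rw [hζself i j]
    exact heidem i j
  · -- Fourier expansion
    intro t
    refine (sub_eq_zero.mp (hperp _ fun u v c => ?_)).symm.symm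
    rw [OldCStarModule.inner_sub_right, hinner_S]
    have h : ∑ i, ∑ j, ⟪ι u v c, ζ i j⟫_A * ⟪ζ i j, t⟫_A = ⟪ι u v c, t⟫_A := by
      have hh : ∀ i j, ⟪ι u v c, ζ i j⟫_A * ⟪ζ i j, t⟫_A
          = ⟪ζ i j <• ⟪ζ i j, ι u v c⟫_A, t⟫_A := by
        intro i j
        rw [OldCStarModule.inner_op_smul_left, OldCStarModule.star_inner]
      simp_rw [hh, ← OldCStarModule.inner_sum_left]
      conv_lhs => rw [← hSimple u v c]
    rw [h, sub_self]
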